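/- For Dyck paths x_1 and x_2, the paths s(x_1) ∧ s(x_2) and s(x_1 ∧ x_2) ∧ s(0) have the same frame, where s denotes lifting, ∧ denotes gluing (concatenation), and 0 is the empty path. -/
import Mathlib


/-- A step of a Dyck path: `true` = up step (1,1), `false` = down step (1,-1). -/
def dstep (b : Bool) : ℤ := if b then 1 else -1

/-- Height of the path after its first `k` steps. -/
def dheight (p : List Bool) (k : ℕ) : ℤ := ((p.take k).map dstep).sum

/-- A Dyck path: ends at height 0 and never goes below the x-axis. -/
def IsDyck (p : List Bool) : Prop :=
  (p.map dstep).sum = 0 ∧ ∀ k, 0 ≤ dheight p k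

/-- Number of lattice points of the path at level `l` (its "feet" at level `l`). -/
def feet (p : List Bool) (l : ℤ) : ℕ :=
  ((List.range (p.length + 1)).map (dheight p)).count l

/-- The frame of a Dyck path: at position `k`, the number of its points at height `k`. -/
def frame (p : List Bool) : ℕ → ℕ := fun k => feet p (k : ℤ)

/-- `DyckFeet m l j` = number of Dyck paths of length `m` with exactly `j` points at level `l`. -/
noncomputable def DyckFeet (m : ℕ) (l : ℤ) (j : ℕ) : ℕ :=
  Set.ncard {p : List Bool | p.length = m ∧ IsDyck p ∧ feet p l = j}

/-- A sequence is admissible if it is the frame of some Dyck path. -/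
def Admissible (I : ℕ → ℕ) : Prop := ∃ p : List Bool, IsDyck p ∧ frame p = I

/-- The list of heights of a path at all its lattice points. -/
def Hts (p : List Bool) : List ℤ := (List.range (p.length + 1)).map (dheight p)

lemma feet_eq_count (p : List Bool) (l : ℤ) : feet p l = (Hts p).count l := rfl

lemma dheight_zero (p : List Bool) : dheight p 0 = 0 := rfl

lemma dheight_cons (b : Bool) (p : List Bool) (k : ℕ) :
    dheight (b :: p) (k + 1) = dstep b + dheight p k := by
  simp [dheight, List.take_succ_cons]

lemma dheight_append (p q : List Bool) (k : ℕ) :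
    dheight (p ++ q) k = dheight p k + dheight q (k - p.length) := by
  simp [dheight, List.take_append]

lemma dheight_of_le (p : List Bool) {k : ℕ} (h : p.length ≤ k) :
    dheight p k = (p.map dstep).sum := by
  simp [dheight, List.take_of_length_le h]

lemma Hts_eq (p : List Bool) :
    Hts p = 0 :: (List.range p.length).map (fun k => dheight p (k + 1)) := by
  rw [Hts, List.range_succ_eq_map, List.map_cons, List.map_map]
  simp [dheight_zero, Function.comp_def, Nat.succ_eq_add_one]

lemma Hts_cons_true (p : List Bool) :
    Hts (true :: p) = 0 :: (Hts p).map (fun z => 1 + z) := by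
  rw [Hts_eq, Hts, List.map_map, List.length_cons]
  congr 1

lemma Hts_append (p q : List Bool) :
    Hts (p ++ q) = Hts p ++ ((Hts q).tail.map (fun z => (p.map dstep).sum + z)) := by
  rw [Hts_eq q, List.tail_cons, List.map_map]
  rw [Hts, List.length_append, show p.length + q.length + 1 = (p.length + 1) + q.length from by omega,
    List.range_add, List.map_append, List.map_map]
  congr 1
  · apply List.map_congr_left
    intro k hk
    rw [List.mem_range] at hk
    rw [dheight_append, show k - p.length = 0 from by omega, dheight_zero, add_zero]
  · apply List.map_congr_left
    intro k _
    simp only [Function.comp_apply]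
    rw [dheight_append, dheight_of_le p (by omega), show p.length + 1 + k - p.length = k + 1 from by omega]

lemma Hts_false (l : List Bool) (hs : (l.map dstep).sum = 0) :
    Hts (l ++ [false]) = Hts l ++ [(-1 : ℤ)] := by
  rw [Hts_append, hs]
  have h0 : Hts [false] = [0, -1] := by decide
  rw [h0]
  simp
/-- The paths s(x₁) ∧ s(x₂) and s(x₁ ∧ x₂) ∧ s(0) have the same frame, where s is lifting
(prepend an up step and append a down step), ∧ is concatenation, and 0 is the empty path. -/
theorem stmt16 (x1 x2 : List Bool) (h1 : IsDyck x1) (h2 : IsDyck x2) :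
    frame ((true :: (x1 ++ [false])) ++ (true :: (x2 ++ [false]))) =
      frame ((true :: ((x1 ++ x2) ++ [false])) ++ [true, false]) := by
  have s1 : (x1.map dstep).sum = 0 := h1.1
  have s2 : (x2.map dstep).sum = 0 := h2.1
  have eA : Hts (true :: (x1 ++ [false])) = 0 :: ((Hts x1).map (fun z => 1 + z) ++ [0]) := by
    rw [Hts_cons_true, Hts_false x1 s1, List.map_append]
    norm_num
  have eB : Hts (true :: (x2 ++ [false])) = 0 :: ((Hts x2).map (fun z => 1 + z) ++ [0]) := by
    rw [Hts_cons_true, Hts_false x2 s2, List.map_append]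
    norm_num
  have e12 : Hts (x1 ++ x2) = Hts x1 ++ (Hts x2).tail := by
    rw [Hts_append, s1]
    simp
  have eP : Hts ((true :: (x1 ++ [false])) ++ (true :: (x2 ++ [false]))) =
      (0 :: ((Hts x1).map (fun z => 1 + z) ++ [0])) ++
        ((Hts x2).map (fun z => 1 + z) ++ [0]) := by
    rw [Hts_append, eA, eB]
    have hs : (((true : Bool) :: (x1 ++ [false])).map dstep).sum = 0 := by
      simp [dstep, s1]
    rw [hs, List.tail_cons]
    simp
  have eQ : Hts ((true :: ((x1 ++ x2) ++ [false])) ++ [true, false]) =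
      (0 :: ((Hts x1).map (fun z => 1 + z) ++ ((Hts x2).tail).map (fun z => 1 + z) ++ [0]))
        ++ [1, 0] := by
    have hs : (((true : Bool) :: ((x1 ++ x2) ++ [false])).map dstep).sum = 0 := by
      simp [dstep, s1, s2]
    have ht : Hts [true, false] = [0, 1, 0] := by decide
    rw [Hts_append, Hts_cons_true, Hts_false (x1 ++ x2) (by simp [s1, s2]), e12, ht, hs,
      List.tail_cons, List.map_append, List.map_append]
    norm_num
  have hx2 : Hts x2 = 0 :: (Hts x2).tail := by
    rw [Hts_eq x2]
    rfl
  funext k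
  show feet _ (k : ℤ) = feet _ (k : ℤ)
  rw [feet_eq_count, feet_eq_count, eP, eQ, hx2]
  simp only [List.map_cons, List.count_cons, List.count_append, List.map_append]
  norm_num
  split_ifs <;> omega
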